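/- Let n ≥ 1 and let g be a nonzero polynomial in K[T] with deg g < p^{n-1}. Then μ(ν_n·g) = μ(g) and λ(ν_n·g) = p^n − p^{n-1} + λ(g). (Equivalently, for a nonzero θ ∈ K[G_{n-1}], the corestriction cor_{n-1}^n(θ) ∈ K[G_n] satisfies μ(cor_{n-1}^n(θ)) = μ(θ) and λ(cor_{n-1}^n(θ)) = p^n − p^{n-1} + λ(θ).) -/
import Mathlib


open Polynomial

/-- The axioms of the normalized additive valuation `ord_ϖ : K → ℤ` of a discrete
valuation ring `O` with uniformizer `ϖ` and fraction field `K`, recorded on the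
nonzero elements of `K`: multiplicativity and the ultrametric inequality. -/
def IsOrd {K : Type*} [Field K] (v : K → ℤ) : Prop :=
  (∀ x y : K, x ≠ 0 → y ≠ 0 → v (x * y) = v x + v y) ∧
  (∀ x y : K, x ≠ 0 → y ≠ 0 → x + y ≠ 0 → min (v x) (v y) ≤ v (x + y))

/-- The μ-invariant of a (nonzero) polynomial `F = Σ aᵢ Tⁱ` over `K`:
`μ(F) = minᵢ ord_ϖ(aᵢ)`. -/
noncomputable def muInv {K : Type*} [Field K] (v : K → ℤ) (F : Polynomial K) : ℤ :=
  sInf {m : ℤ | ∃ i, F.coeff i ≠ 0 ∧ v (F.coeff i) = m}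

/-- The λ-invariant of a (nonzero) polynomial over `K`:
`λ(F) = min { i : ord_ϖ(aᵢ) = μ(F) }`. -/
noncomputable def lamInv {K : Type*} [Field K] (v : K → ℤ) (F : Polynomial K) : ℕ :=
  sInf {i : ℕ | F.coeff i ≠ 0 ∧ v (F.coeff i) = muInv v F}

/-- `F ∈ O[T]`: all coefficients lie in the valuation ring, i.e. have valuation `≥ 0`. -/
def IntegralPoly {K : Type*} [Field K] (v : K → ℤ) (F : Polynomial K) : Prop :=
  ∀ i, F.coeff i ≠ 0 → 0 ≤ v (F.coeff i)

/-- The residue field `O/(ϖ)` has characteristic `p`, i.e. `p` lies in the maximal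
ideal `(ϖ)` of `O` (equivalently `ord_ϖ(p) ≥ 1`, or `p = 0` in `K`). -/
def ResidueCharP {K : Type*} [Field K] (v : K → ℤ) (p : ℕ) : Prop :=
  (p : K) = 0 ∨ 1 ≤ v (p : K)

/-- `ν_n(T) = Σ_{k=0}^{p-1} (1+T)^{k·p^(n-1)}`, the polynomial representing the
corestriction map `cor_{n-1}^n : K[G_{n-1}] → K[G_n]`. -/
noncomputable def nuPoly (K : Type*) [Field K] (p n : ℕ) : Polynomial K :=
  ∑ k ∈ Finset.range p, (1 + Polynomial.X) ^ (k * p ^ (n - 1))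

section Aux

variable {K : Type*} [Field K] {v : K → ℤ}

lemma IsOrd.v_one (hv : IsOrd v) : v 1 = 0 := by
  have h := hv.1 1 1 one_ne_zero one_ne_zero
  rw [mul_one] at h; omega

lemma IsOrd.v_neg (hv : IsOrd v) {x : K} (hx : x ≠ 0) : v (-x) = v x := by
  have h1 := hv.1 (-x) (-x) (neg_ne_zero.mpr hx) (neg_ne_zero.mpr hx)
  have h2 := hv.1 x x hx hx
  rw [neg_mul_neg] at h1
  omega

/-- If `v x < B` and the other summand is zero or has valuation `≥ B`,
then the sum is nonzero with valuation `v x`. -/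
lemma IsOrd.add_eq (hv : IsOrd v) {x y : K} {B : ℤ} (hx : x ≠ 0) (hxB : v x < B)
    (hy : y = 0 ∨ B ≤ v y) : x + y ≠ 0 ∧ v (x + y) = v x := by
  by_cases hy0 : y = 0
  · subst hy0; simpa using hx
  have hyB : B ≤ v y := hy.resolve_left hy0
  have hne : x + y ≠ 0 := by
    intro h
    rw [add_eq_zero_iff_eq_neg.mp h, hv.v_neg hy0] at hxB
    omega
  refine ⟨hne, ?_⟩
  have h1 := hv.2 x y hx hy0 hne
  have h2 := hv.2 (x + y) (-y) hne (neg_ne_zero.mpr hy0) (by simpa using hx)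
  rw [add_neg_cancel_right] at h2
  have h3 := hv.v_neg hy0
  omega

lemma IsOrd.add_bound (hv : IsOrd v) {x y : K} {B : ℤ}
    (hx : x = 0 ∨ B ≤ v x) (hy : y = 0 ∨ B ≤ v y) : x + y = 0 ∨ B ≤ v (x + y) := by
  by_cases hx0 : x = 0
  · subst hx0; simpa using hy
  by_cases hy0 : y = 0
  · subst hy0; simpa using hx
  by_cases hs : x + y = 0
  · exact Or.inl hs
  right
  have h1 := hv.2 x y hx0 hy0 hs
  have hxB := hx.resolve_left hx0
  have hyB := hy.resolve_left hy0
  omega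

lemma IsOrd.sum_bound (hv : IsOrd v) {ι : Type*} (s : Finset ι) (f : ι → K) (B : ℤ)
    (h : ∀ i ∈ s, f i = 0 ∨ B ≤ v (f i)) :
    (∑ i ∈ s, f i) = 0 ∨ B ≤ v (∑ i ∈ s, f i) := by
  classical
  induction s using Finset.cons_induction with
  | empty => simp
  | cons a s ha ih =>
    rw [Finset.sum_cons]
    exact hv.add_bound (h a (Finset.mem_cons_self a s))
      (ih fun i hi => h i (Finset.mem_cons_of_mem hi))

lemma IsOrd.natCast_nonneg (hv : IsOrd v) : ∀ m : ℕ, (m : K) ≠ 0 → 0 ≤ v (m : K) := by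
  intro m
  induction m with
  | zero => intro h; simp at h
  | succ m ih =>
    intro h
    push_cast at h ⊢
    by_cases hm : (m : K) = 0
    · rw [hm, zero_add, hv.v_one]
    · have h2 := hv.2 (m : K) 1 hm one_ne_zero h
      have h3 := ih hm
      have h4 := hv.v_one
      omega

lemma IsOrd.intCast_nonneg (hv : IsOrd v) (m : ℤ) (h : (m : K) ≠ 0) : 0 ≤ v (m : K) := by
  have key : ∀ a : ℕ, ((a : ℤ) : K) ≠ 0 → 0 ≤ v (((a : ℤ) : K)) := by
    intro a ha
    rw [Int.cast_natCast] at ha ⊢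
    exact hv.natCast_nonneg a ha
  rcases m.natAbs_eq with he | he
  · rw [he] at h ⊢; exact key _ h
  · rw [he] at h ⊢
    rw [Int.cast_neg] at h ⊢
    rw [hv.v_neg (by simpa using h)]
    exact key _ (by simpa using h)

lemma res_bound (hv : IsOrd v) {p : ℕ} (hres : ResidueCharP v p) (m : ℤ)
    (h : (p : K) * (m : K) ≠ 0) : 1 ≤ v ((p : K) * (m : K)) := by
  have hp0 : (p : K) ≠ 0 := fun h0 => h (by rw [h0, zero_mul])
  have hm0 : (m : K) ≠ 0 := fun h0 => h (by rw [h0, mul_zero])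
  have hvp : 1 ≤ v (p : K) := hres.resolve_left hp0
  rw [hv.1 _ _ hp0 hm0]
  have := hv.intCast_nonneg m hm0
  omega

/-! ### μ and λ basics -/

lemma muSet_eq (v : K → ℤ) (g : Polynomial K) :
    {m : ℤ | ∃ i, g.coeff i ≠ 0 ∧ v (g.coeff i) = m} =
      ↑(g.support.image fun i => v (g.coeff i)) := by
  ext m
  simp only [Set.mem_setOf_eq, Finset.coe_image, Set.mem_image, Finset.mem_coe,
    Polynomial.mem_support_iff]

lemma muSet_finite (v : K → ℤ) (g : Polynomial K) :
    {m : ℤ | ∃ i, g.coeff i ≠ 0 ∧ v (g.coeff i) = m}.Finite := by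
  rw [muSet_eq]; exact Finset.finite_toSet _

lemma muSet_nonempty (v : K → ℤ) {g : Polynomial K} (hg : g ≠ 0) :
    {m : ℤ | ∃ i, g.coeff i ≠ 0 ∧ v (g.coeff i) = m}.Nonempty :=
  ⟨v (g.coeff g.natDegree), g.natDegree,
    fun h => hg (Polynomial.leadingCoeff_eq_zero.mp h), rfl⟩

lemma mu_le_coeff (v : K → ℤ) {g : Polynomial K} {i : ℕ} (h : g.coeff i ≠ 0) :
    muInv v g ≤ v (g.coeff i) :=
  csInf_le ((muSet_finite v g).bddBelow) ⟨i, h, rfl⟩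

lemma exists_mu (v : K → ℤ) {g : Polynomial K} (hg : g ≠ 0) :
    ∃ i, g.coeff i ≠ 0 ∧ v (g.coeff i) = muInv v g :=
  (muSet_nonempty v hg).csInf_mem (muSet_finite v g)

lemma lam_mem (v : K → ℤ) {g : Polynomial K} (hg : g ≠ 0) :
    g.coeff (lamInv v g) ≠ 0 ∧ v (g.coeff (lamInv v g)) = muInv v g := by
  have : ∃ i, i ∈ {i : ℕ | g.coeff i ≠ 0 ∧ v (g.coeff i) = muInv v g} := exists_mu v hg
  exact Nat.sInf_mem this

lemma lam_min (v : K → ℤ) {g : Polynomial K} {i : ℕ} (hi : i < lamInv v g) :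
    g.coeff i = 0 ∨ v (g.coeff i) ≠ muInv v g := by
  by_contra h
  push_neg at h
  have : lamInv v g ≤ i := Nat.sInf_le ⟨h.1, h.2⟩
  omega

end Aux


/-! ### Structure of ν_n -/

noncomputable def nuZ (p n : ℕ) : Polynomial ℤ :=
  ∑ k ∈ Finset.range p, (1 + X) ^ (k * p ^ (n - 1))

lemma nuPoly_eq_map (K : Type*) [Field K] (p n : ℕ) :
    nuPoly K p n = (nuZ p n).map (Int.castRingHom K) := by
  simp [nuPoly, nuZ, Polynomial.map_sum, Polynomial.map_pow]

lemma nuZ_map_zmod (p n : ℕ) (hp : p.Prime) (hn : 1 ≤ n) :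
    (nuZ p n).map (Int.castRingHom (ZMod p)) = X ^ (p ^ n - p ^ (n - 1)) := by
  haveI : Fact p.Prime := ⟨hp⟩
  have hq : p ^ (n - 1) * p = p ^ n := by
    rw [← pow_succ]; congr 1; omega
  have hle : p ^ (n - 1) ≤ p ^ n := Nat.pow_le_pow_right hp.pos (by omega)
  have hmap : (nuZ p n).map (Int.castRingHom (ZMod p)) =
      ∑ k ∈ Finset.range p, ((1 : (ZMod p)[X]) + X ^ p ^ (n - 1)) ^ k := by
    simp only [nuZ, Polynomial.map_sum, Polynomial.map_pow, Polynomial.map_add,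
      Polynomial.map_one, Polynomial.map_X]
    refine Finset.sum_congr rfl fun k _ => ?_
    rw [mul_comm k, pow_mul]
    congr 1
    have h := add_pow_char_pow (1 : (ZMod p)[X]) X p (n - 1)
    simpa using h
  rw [hmap]
  have hx : (X : (ZMod p)[X]) ^ p ^ (n - 1) ≠ 0 := pow_ne_zero _ X_ne_zero
  apply mul_right_cancel₀ hx
  have hgeom := geom_sum_mul ((1 : (ZMod p)[X]) + X ^ p ^ (n - 1)) p
  have h1 : ((1 : (ZMod p)[X]) + X ^ p ^ (n - 1)) - 1 = X ^ p ^ (n - 1) := by ring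
  have h2 : ((1 : (ZMod p)[X]) + X ^ p ^ (n - 1)) ^ p = 1 + X ^ (p ^ (n - 1) * p) := by
    rw [add_pow_char 1 (X ^ p ^ (n - 1)) p, one_pow, ← pow_mul]
  rw [h1, h2] at hgeom
  have h3 : p ^ n - p ^ (n - 1) + p ^ (n - 1) = p ^ (n - 1) * p := by
    rw [Nat.sub_add_cancel hle, ← hq]
  rw [hgeom, add_sub_cancel_left, ← pow_add, h3]

lemma nu_coeff_decomp {K : Type*} [Field K] (p n : ℕ) (hp : p.Prime) (hn : 1 ≤ n) (i : ℕ) :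
    ∃ m : ℤ, (nuPoly K p n - X ^ (p ^ n - p ^ (n - 1))).coeff i = (p : K) * (m : K) := by
  have h0 : ((nuZ p n - X ^ (p ^ n - p ^ (n - 1))).map (Int.castRingHom (ZMod p))) = 0 := by
    rw [Polynomial.map_sub, nuZ_map_zmod p n hp hn, Polynomial.map_pow, Polynomial.map_X,
      sub_self]
  have h1 : (((nuZ p n - X ^ (p ^ n - p ^ (n - 1))).coeff i : ℤ) : ZMod p) = 0 := by
    have h := congrArg (fun q => q.coeff i) h0
    simpa [Polynomial.coeff_map] using h
  obtain ⟨m, hm⟩ := (ZMod.intCast_zmod_eq_zero_iff_dvd _ p).mp h1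
  refine ⟨m, ?_⟩
  have h2 : (nuPoly K p n - X ^ (p ^ n - p ^ (n - 1))).coeff i =
      (((nuZ p n - X ^ (p ^ n - p ^ (n - 1))).coeff i : ℤ) : K) := by
    rw [nuPoly_eq_map]
    have hXp : (X : K[X]) ^ (p ^ n - p ^ (n - 1)) =
        ((X ^ (p ^ n - p ^ (n - 1)) : Polynomial ℤ).map (Int.castRingHom K)) := by
      simp
    rw [hXp, ← Polynomial.map_sub, Polynomial.coeff_map]
    simp
  rw [h2, hm]
  push_cast
  ring

/-- Lemma 3.3(2): effect of corestriction (multiplication by ν_n) on the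
Iwasawa invariants: μ is preserved and λ grows by p^n − p^(n-1). -/
theorem invariants_of_corestriction
    {K : Type*} [Field K] (p : ℕ) (hp : p.Prime)
    (v : K → ℤ) (hv : IsOrd v) (hres : ResidueCharP v p)
    (n : ℕ) (hn : 1 ≤ n)
    (g : Polynomial K) (hg : g ≠ 0) (hdeg : g.degree < (p ^ (n - 1) : ℕ)) :
    nuPoly K p n * g ≠ 0 ∧
      muInv v (nuPoly K p n * g) = muInv v g ∧
      lamInv v (nuPoly K p n * g) = p ^ n - p ^ (n - 1) + lamInv v g := by
  classical
  obtain ⟨hl0, hlv⟩ := lam_mem v hg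
  have hnu : nuPoly K p n =
      X ^ (p ^ n - p ^ (n - 1)) + (nuPoly K p n - X ^ (p ^ n - p ^ (n - 1))) := by ring
  have hcoeff : ∀ i, (nuPoly K p n * g).coeff i =
      (if p ^ n - p ^ (n - 1) ≤ i then g.coeff (i - (p ^ n - p ^ (n - 1))) else 0) +
        ((nuPoly K p n - X ^ (p ^ n - p ^ (n - 1))) * g).coeff i := by
    intro i
    conv_lhs => rw [hnu]
    rw [add_mul, Polynomial.coeff_add, X_pow_mul, Polynomial.coeff_mul_X_pow']
  have heg : ∀ i, ((nuPoly K p n - X ^ (p ^ n - p ^ (n - 1))) * g).coeff i = 0 ∨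
      muInv v g + 1 ≤ v (((nuPoly K p n - X ^ (p ^ n - p ^ (n - 1))) * g).coeff i) := by
    intro i
    rw [Polynomial.coeff_mul]
    refine hv.sum_bound _ _ _ ?_
    rintro ⟨a, b⟩ hab
    obtain ⟨m, hm⟩ := nu_coeff_decomp (K := K) p n hp hn a
    by_cases h0 : (nuPoly K p n - X ^ (p ^ n - p ^ (n - 1))).coeff a * g.coeff b = 0
    · exact Or.inl h0
    right
    have ha : (nuPoly K p n - X ^ (p ^ n - p ^ (n - 1))).coeff a ≠ 0 := fun h =>
      h0 (by rw [h, zero_mul])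
    have hb : g.coeff b ≠ 0 := fun h => h0 (by rw [h, mul_zero])
    rw [hv.1 _ _ ha hb]
    have h1 : 1 ≤ v ((nuPoly K p n - X ^ (p ^ n - p ^ (n - 1))).coeff a) := by
      rw [hm]; exact res_bound hv hres m (hm ▸ ha)
    have h2 : muInv v g ≤ v (g.coeff b) := mu_le_coeff v hb
    omega
  -- the key coefficient
  have hsub : p ^ n - p ^ (n - 1) + lamInv v g - (p ^ n - p ^ (n - 1)) = lamInv v g := by omega
  have hkey' : (nuPoly K p n * g).coeff (p ^ n - p ^ (n - 1) + lamInv v g) =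
      g.coeff (lamInv v g) +
        ((nuPoly K p n - X ^ (p ^ n - p ^ (n - 1))) * g).coeff
          (p ^ n - p ^ (n - 1) + lamInv v g) := by
    rw [hcoeff, if_pos (by omega), hsub]
  have hkey : (nuPoly K p n * g).coeff (p ^ n - p ^ (n - 1) + lamInv v g) ≠ 0 ∧
      v ((nuPoly K p n * g).coeff (p ^ n - p ^ (n - 1) + lamInv v g)) = muInv v g := by
    rw [hkey']
    have := hv.add_eq (B := muInv v g + 1) hl0 (by omega)
      (heg (p ^ n - p ^ (n - 1) + lamInv v g))
    exact ⟨this.1, by rw [this.2, hlv]⟩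
  have hF0 : nuPoly K p n * g ≠ 0 := fun h => hkey.1 (by rw [h, Polynomial.coeff_zero])
  -- lower bound on valuations of all coefficients
  have hmono : ∀ i, (nuPoly K p n * g).coeff i ≠ 0 →
      muInv v g ≤ v ((nuPoly K p n * g).coeff i) := by
    intro i hi
    have hx : (if p ^ n - p ^ (n - 1) ≤ i then g.coeff (i - (p ^ n - p ^ (n - 1))) else 0) = 0 ∨
        muInv v g ≤ v (if p ^ n - p ^ (n - 1) ≤ i then g.coeff (i - (p ^ n - p ^ (n - 1)))
          else 0) := by
      split
      · by_cases hz : g.coeff (i - (p ^ n - p ^ (n - 1))) = 0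
        · exact Or.inl hz
        · exact Or.inr (mu_le_coeff v hz)
      · exact Or.inl rfl
    have hy := heg i
    have := hv.add_bound hx (hy.imp id fun h => by omega)
    rw [← hcoeff i] at this
    exact this.resolve_left hi
  have hmu : muInv v (nuPoly K p n * g) = muInv v g := by
    refine le_antisymm ?_ ?_
    · rw [← hkey.2]; exact mu_le_coeff v hkey.1
    · obtain ⟨j, hj0, hjv⟩ := exists_mu v hF0
      rw [← hjv]; exact hmono j hj0
  refine ⟨hF0, hmu, ?_⟩
  -- λ computation
  refine le_antisymm (Nat.sInf_le ⟨hkey.1, by rw [hmu]; exact hkey.2⟩) ?_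
  obtain ⟨hj0, hjv⟩ := lam_mem v hF0
  rw [hmu] at hjv
  by_contra hlt
  push_neg at hlt
  -- lamInv v (nuPoly K p n * g) < p ^ n - p ^ (n - 1) + lamInv v g
  set j := lamInv v (nuPoly K p n * g) with hj
  have hbad : (nuPoly K p n * g).coeff j = 0 ∨
      muInv v g + 1 ≤ v ((nuPoly K p n * g).coeff j) := by
    have hx : (if p ^ n - p ^ (n - 1) ≤ j then g.coeff (j - (p ^ n - p ^ (n - 1))) else 0) = 0 ∨
        muInv v g + 1 ≤ v (if p ^ n - p ^ (n - 1) ≤ j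
          then g.coeff (j - (p ^ n - p ^ (n - 1))) else 0) := by
      split
      · rename_i hNj
        have hjl : j - (p ^ n - p ^ (n - 1)) < lamInv v g := by omega
        rcases lam_min v hjl with hz | hne
        · exact Or.inl hz
        · by_cases hz : g.coeff (j - (p ^ n - p ^ (n - 1))) = 0
          · exact Or.inl hz
          · have := mu_le_coeff v hz
            exact Or.inr (by omega)
      · exact Or.inl rfl
    have := hv.add_bound hx (heg j)
    rw [← hcoeff j] at this
    exact this
  rcases hbad with h | h
  · exact hj0 h
  · omega
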